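/- Let G be a finite simple graph on n ≥ 1 vertices with ᾱ(G) = n, and let r be the number of connected components of G. Then n ≤ 2^r − 1; equivalently, G has at least ⌈log₂(n + 1)⌉ connected components. -/

import Mathlib

namespace SimpleGraph

variable {V : Type*}

/-- `G` has an `(s,t)`-bipartite-hole. -/
def HasBipHole (G : SimpleGraph V) (s t : ℕ) : Prop :=
  ∃ S T : Finset V, Disjoint S T ∧ S.card = s ∧ T.card = t ∧
    ∀ a ∈ S, ∀ b ∈ T, ¬ G.Adj a b

/-- The bipartite-hole-number `ᾱ(G)`. -/
noncomputable def bipHoleNum (G : SimpleGraph V) : ℕ :=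
  sInf {k | 0 < k ∧ ∃ s t : ℕ, 0 < s ∧ 0 < t ∧ s + t = k + 1 ∧ ¬ G.HasBipHole s t}

end SimpleGraph

/-- If `G` is a graph on `n ≥ 1` vertices with `ᾱ(G) = n` and `r` connected
components, then `n ≤ 2 ^ r - 1`; equivalently, `r ≥ ⌈log₂ (n + 1)⌉`. -/
theorem stmt9 {V : Type*} [Fintype V] [DecidableEq V] [Nonempty V] (G : SimpleGraph V)
    (h : G.bipHoleNum = Fintype.card V) :
    Fintype.card V ≤ 2 ^ (Nat.card G.ConnectedComponent) - 1 ∧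
      Nat.clog 2 (Fintype.card V + 1) ≤ Nat.card G.ConnectedComponent := by
  classical
  set n := Fintype.card V with hn
  have hn1 : 1 ≤ n := Fintype.card_pos
  -- every (s,t) with s+t ≤ n has a bipartite hole
  have hole : ∀ s t : ℕ, 0 < s → 0 < t → s + t ≤ n → G.HasBipHole s t := by
    intro s t hs ht hst
    by_contra hnot
    have hmem : s + t - 1 ∈ {k | 0 < k ∧ ∃ s' t' : ℕ, 0 < s' ∧ 0 < t' ∧ s' + t' = k + 1 ∧
        ¬ G.HasBipHole s' t'} := ⟨by omega, s, t, hs, ht, by omega, hnot⟩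
    have := Nat.sInf_le hmem
    rw [← SimpleGraph.bipHoleNum, h] at this
    omega
  have _inst : Fintype G.ConnectedComponent := Fintype.ofFinite _
  -- for every a ≤ n there is a union of components of size a
  have claim : ∀ a : ℕ, a ≤ n → ∃ A : Finset G.ConnectedComponent,
      (Finset.univ.filter (fun v => G.connectedComponentMk v ∈ A)).card = a := by
    intro a ha
    rcases Nat.eq_zero_or_pos a with rfl | hapos
    · exact ⟨∅, by simp⟩
    rcases eq_or_lt_of_le ha with rfl | halt
    · refine ⟨Finset.univ, ?_⟩
      simp [hn]
    obtain ⟨S, T, hdisj, hS, hT, hno⟩ := hole a (n - a) hapos (by omega) (by omega)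
    have huniv : S ∪ T = Finset.univ := by
      apply Finset.eq_univ_of_card
      rw [Finset.card_union_of_disjoint hdisj, hS, hT]
      omega
    have hclosed : ∀ u v : V, (w : G.Walk u v) → u ∈ S → v ∈ S := by
      intro u v w
      induction w with
      | nil => exact id
      | @cons a b c hadj p ih =>
        intro ha'
        apply ih
        have hb : b ∈ S ∪ T := huniv ▸ Finset.mem_univ b
        rcases Finset.mem_union.mp hb with hb | hb
        · exact hb
        · exact absurd hadj (hno a ha' b hb)
    refine ⟨S.image G.connectedComponentMk, ?_⟩
    have hfil : (Finset.univ.filter (fun v => G.connectedComponentMk v ∈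
        S.image G.connectedComponentMk)) = S := by
      ext v
      simp only [Finset.mem_filter, Finset.mem_univ, true_and, Finset.mem_image]
      constructor
      · rintro ⟨u, hu, hmk⟩
        obtain ⟨w⟩ := (SimpleGraph.ConnectedComponent.eq.mp hmk)
        exact hclosed u v w hu
      · intro hv; exact ⟨v, hv, rfl⟩
    rw [hfil, hS]
  -- build injective map Fin (n+1) → Finset (ConnectedComponent)
  have key : n + 1 ≤ 2 ^ Nat.card G.ConnectedComponent := by
    have f : ∀ a : Fin (n + 1), ∃ A : Finset G.ConnectedComponent,
        (Finset.univ.filter (fun v => G.connectedComponentMk v ∈ A)).card = (a : ℕ) :=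
      fun a => claim a (by omega)
    choose F hF using f
    have hinj : Function.Injective F := by
      intro a b hab
      have : (a : ℕ) = (b : ℕ) := by rw [← hF a, ← hF b, hab]
      exact Fin.ext this
    have := Fintype.card_le_of_injective F hinj
    simpa [Fintype.card_finset, Nat.card_eq_fintype_card] using this
  refine ⟨by omega, ?_⟩
  exact (Nat.clog_le_iff_le_pow (by norm_num)).mpr key
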